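/- Every bicyclic bitrade in τ-representation is spherical: if [τ₁, τ₂, τ₃] satisfies (T1), (T2), (T3) and some τ_j consists of exactly two cycles, then ⟨τ₁,τ₂,τ₃⟩ is transitive on Γ and z(τ₁) + z(τ₂) + z(τ₃) = |Γ| + 2. -/

import Mathlib

/-- The set of points moved by a permutation. -/
def mov (σ : Equiv.Perm ℕ) : Set ℕ := {x | σ x ≠ x}

/-- The underlying set `Γ = mov(τ₁) ∪ mov(τ₂) ∪ mov(τ₃)` of a triple of permutations. -/
def Gam (τ : Fin 3 → Equiv.Perm ℕ) : Set ℕ := mov (τ 0) ∪ mov (τ 1) ∪ mov (τ 2)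

/-- A bitrade in τ-representation: a triple `[τ₁, τ₂, τ₃]` of permutations of the
finite set `Γ = mov(τ₁) ∪ mov(τ₂) ∪ mov(τ₃)` (all permutations composed left to
right) satisfying (T1) `τ₁τ₂τ₃ = 1`, (T2) any cycle of `τ_i` and any cycle of `τ_j`
(`i < j`) move at most one common point, and (T3) each `τ_i` is fixed-point-free
on `Γ`. -/
structure IsTauRep (τ : Fin 3 → Equiv.Perm ℕ) : Prop where
  fin : (Gam τ).Finite
  t1 : ∀ x, τ 2 (τ 1 (τ 0 x)) = x
  t2 : ∀ i j : Fin 3, i < j → ∀ x y : ℕ, x ≠ y →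
    ¬((τ i).SameCycle x y ∧ (τ j).SameCycle x y)
  t3 : ∀ i : Fin 3, ∀ x ∈ Gam τ, τ i x ≠ x

/-- The same-cycle setoid on the set of points moved by `σ`;
its classes are the (nontrivial) cycles of `σ`. -/
def cycSetoidOn (σ : Equiv.Perm ℕ) : Setoid (mov σ) :=
  ⟨fun a b => σ.SameCycle a.1 b.1,
    ⟨fun a => Equiv.Perm.SameCycle.refl σ a.1,
     fun h => h.symm, fun h h' => h.trans h'⟩⟩

/-- `zc σ` is the number of cycles of `σ`. -/
noncomputable def zc (σ : Equiv.Perm ℕ) : ℕ := Nat.card (Quotient (cycSetoidOn σ))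

/-- (T4): the group `⟨τ₁, τ₂, τ₃⟩` acts transitively on `Γ`. -/
def TransOn (τ : Fin 3 → Equiv.Perm ℕ) : Prop :=
  ∀ x ∈ Gam τ, ∀ y ∈ Gam τ,
    ∃ g ∈ Subgroup.closure ({τ 0, τ 1, τ 2} : Set (Equiv.Perm ℕ)), g x = y

/-- A spherical bitrade in τ-representation: (T4) holds and the genus defined by
Euler's formula `order = size + 2 - 2g` is zero. -/
def Spherical (τ : Fin 3 → Equiv.Perm ℕ) : Prop :=
  IsTauRep τ ∧ TransOn τ ∧
    zc (τ 0) + zc (τ 1) + zc (τ 2) = Nat.card (Gam τ) + 2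

/-- A bitrade in τ-representation is bicyclic if some `τ_j` has exactly two cycles. -/
def Bicyclic (τ : Fin 3 → Equiv.Perm ℕ) : Prop := ∃ j : Fin 3, zc (τ j) = 2

/-- The inverse `Z⁻¹ = [τ₁⁻¹, τ₂⁻¹, τ₂τ₁]` of a bitrade in τ-representation
(`τ₂τ₁`, composed left to right, is `τ 0 * τ 1` in Lean's convention). -/
def ZInv (τ : Fin 3 → Equiv.Perm ℕ) : Fin 3 → Equiv.Perm ℕ :=
  ![(τ 0)⁻¹, (τ 1)⁻¹, τ 0 * τ 1]

/-- `SlideRel τ x j u τ'` says that `τ'` is the result of the slide expansion of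
`τ` at the point `x ∈ Γ` in direction `j`, with new point `u ∉ Γ`.  Writing
`k = j+1`, `l = j+2`, `w = xτ_j`, `a = xτ_j⁻¹`, `b = wτ_j`, `z = xτ_k`,
`y = wτ_l⁻¹`, the preconditions are that the `τ_j`-cycle through `x` has length at
least 3 and that the `τ_k`-cycle through `x` and the `τ_l`-cycle through `w` have
no common point; the new permutations send `a ↦ u ↦ b`, `x ↦ w ↦ x` (direction `j`),
insert `u` after `x` (direction `k`) and insert `u` between `y` and `w`
(direction `l`), agreeing with the old ones elsewhere. -/
def SlideRel (τ : Fin 3 → Equiv.Perm ℕ) (x : ℕ) (j : Fin 3) (u : ℕ)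
    (τ' : Fin 3 → Equiv.Perm ℕ) : Prop :=
  x ∈ Gam τ ∧ u ∉ Gam τ ∧
  τ j x ≠ x ∧ τ j (τ j x) ≠ x ∧
  (∀ p : ℕ, (τ (j + 1)).SameCycle x p → (τ (j + 2)).SameCycle (τ j x) p → False) ∧
  (τ' j ((τ j)⁻¹ x) = u ∧ τ' j u = τ j (τ j x) ∧
    τ' j x = τ j x ∧ τ' j (τ j x) = x ∧
    ∀ p : ℕ, p ≠ (τ j)⁻¹ x → p ≠ u → p ≠ x → p ≠ τ j x → τ' j p = τ j p) ∧
  (τ' (j + 1) x = u ∧ τ' (j + 1) u = τ (j + 1) x ∧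
    ∀ p : ℕ, p ≠ x → p ≠ u → τ' (j + 1) p = τ (j + 1) p) ∧
  (τ' (j + 2) ((τ (j + 2))⁻¹ (τ j x)) = u ∧ τ' (j + 2) u = τ j x ∧
    ∀ p : ℕ, p ≠ (τ (j + 2))⁻¹ (τ j x) → p ≠ u → τ' (j + 2) p = τ (j + 2) p)

-- ===== auxiliary lemmas =====
lemma mov_subset_Gam (τ : Fin 3 → Equiv.Perm ℕ) (i : Fin 3) : mov (τ i) ⊆ Gam τ := by
  fin_cases i
  · exact fun x hx => Or.inl (Or.inl hx)
  · exact fun x hx => Or.inl (Or.inr hx)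
  · exact fun x hx => Or.inr hx

lemma t2' {τ : Fin 3 → Equiv.Perm ℕ} (h : IsTauRep τ) {i j : Fin 3} (hij : i ≠ j)
    {x y : ℕ} (hxy : x ≠ y) (h1 : (τ i).SameCycle x y) (h2 : (τ j).SameCycle x y) : False := by
  rcases lt_or_gt_of_ne hij with hl | hl
  · exact h.t2 i j hl x y hxy ⟨h1, h2⟩
  · exact h.t2 j i hl x y hxy ⟨h2, h1⟩

lemma three_classes {σ : Equiv.Perm ℕ} (hfin : (mov σ).Finite) {a b c : ℕ}
    (ha : σ a ≠ a) (hb : σ b ≠ b) (hc : σ c ≠ c)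
    (hab : ¬σ.SameCycle a b) (hac : ¬σ.SameCycle a c) (hbc : ¬σ.SameCycle b c) :
    zc σ ≠ 2 := by
  intro h2
  have : Finite (mov σ) := hfin.to_subtype
  set Q := Quotient (cycSetoidOn σ)
  let f : Fin 3 → Q := ![Quotient.mk _ ⟨a, ha⟩, Quotient.mk _ ⟨b, hb⟩, Quotient.mk _ ⟨c, hc⟩]
  have finj : Function.Injective f := by
    intro i j hij
    fin_cases i <;> fin_cases j <;> first
      | rfl
      | (exfalso; first
          | exact hab (Quotient.exact hij)
          | exact hac (Quotient.exact hij)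
          | exact hbc (Quotient.exact hij)
          | exact hab (Quotient.exact hij.symm)
          | exact hac (Quotient.exact hij.symm)
          | exact hbc (Quotient.exact hij.symm))
  have := Nat.card_le_card_of_injective f finj
  simp [Nat.card_eq_fintype_card] at this
  rw [show Nat.card Q = 2 from h2] at this
  omega

theorem Equiv.Perm.apply_inv_self (σ : Equiv.Perm ℕ) (x : ℕ) : σ (σ⁻¹ x) = x :=
  (Equiv.eq_symm_apply σ).mp rfl

theorem Equiv.Perm.inv_apply_self (σ : Equiv.Perm ℕ) (x : ℕ) : σ⁻¹ (σ x) = x :=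
  Equiv.Perm.inv_eq_iff_eq.mpr rfl

lemma inv_apply_invol {σ : Equiv.Perm ℕ} (h2 : ∀ x, σ x ≠ x → σ (σ x) = x)
    {x : ℕ} (hx : σ x ≠ x) : σ⁻¹ x = σ x := by
  apply σ.injective
  rw [h2 x hx, Equiv.Perm.apply_inv_self]

lemma sameCycle_invol {σ : Equiv.Perm ℕ} (h2 : ∀ x, σ x ≠ x → σ (σ x) = x)
    {x y : ℕ} (hx : σ x ≠ x) (h : σ.SameCycle x y) : y = x ∨ y = σ x := by
  obtain ⟨n, rfl⟩ := h
  induction n using Int.induction_on with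
  | zero => left; simp
  | succ k ih =>
      have hrw : σ ^ ((k : ℤ) + 1) = σ * σ ^ (k : ℤ) := by
        rw [add_comm, zpow_add, zpow_one]
      rw [hrw, Equiv.Perm.mul_apply]
      rcases ih with hh | hh
      · right; rw [hh]
      · left; rw [hh, h2 x hx]
  | pred k ih =>
      have hrw : σ ^ (-(k : ℤ) - 1) = σ⁻¹ * σ ^ (-(k : ℤ)) := by
        rw [sub_eq_add_neg, add_comm, zpow_add, zpow_neg, zpow_one]
      rw [hrw, Equiv.Perm.mul_apply]
      rcases ih with hh | hh
      · right; rw [hh, inv_apply_invol h2 hx]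
      · left; rw [hh, ← h2 x hx, Equiv.Perm.inv_apply_self, h2 x hx]

lemma card_mov_invol {σ : Equiv.Perm ℕ} (hfin : (mov σ).Finite)
    (h2 : ∀ x, σ x ≠ x → σ (σ x) = x) : Nat.card (mov σ) = 2 * zc σ := by
  have : Finite (mov σ) := hfin.to_subtype
  have hmem : ∀ x : mov σ, σ x.1 ≠ x.1 := fun x => x.2
  have hσmem : ∀ x : ℕ, σ x ≠ x → σ (σ x) ≠ σ x := by
    intro x hx hc
    exact hx (σ.injective hc)
  let f : mov σ → Quotient (cycSetoidOn σ) × Bool :=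
    fun x => (Quotient.mk _ x, decide (x.1 < σ x.1))
  have hbij : Function.Bijective f := by
    constructor
    · intro x y hxy
      have h1 : σ.SameCycle x.1 y.1 := Quotient.exact (Prod.ext_iff.1 hxy).1
      have hbq : decide (x.1 < σ x.1) = decide (y.1 < σ y.1) := (Prod.ext_iff.1 hxy).2
      rcases sameCycle_invol h2 (hmem x) h1 with hh | hh
      · exact Subtype.ext hh.symm
      · exfalso
        rw [hh, h2 x.1 (hmem x)] at hbq
        rcases lt_trichotomy x.1 (σ x.1) with hlt | heq | hlt
        · simp [hlt, not_lt.2 hlt.le] at hbq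
        · exact hmem x heq.symm
        · simp [hlt, not_lt.2 hlt.le] at hbq
    · rintro ⟨q, b⟩
      obtain ⟨x, rfl⟩ := Quotient.exists_rep q
      have hsx : σ x.1 ∈ mov σ := hσmem x.1 (hmem x)
      have hsc : σ.SameCycle x.1 (σ x.1) := ⟨1, by simp⟩
      have hq : (Quotient.mk _ (⟨σ x.1, hsx⟩ : mov σ) : Quotient (cycSetoidOn σ)) =
          Quotient.mk _ x := Quotient.sound hsc.symm
      by_cases hd : decide (x.1 < σ x.1) = b
      · exact ⟨x, by simp [f, hd]⟩
      · refine ⟨⟨σ x.1, hsx⟩, ?_⟩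
        simp only [f, hq]
        have h22 : σ (σ x.1) = x.1 := h2 x.1 (hmem x)
        have hne := hmem x
        ext
        · rfl
        · simp only [h22]
          rcases lt_trichotomy x.1 (σ x.1) with hlt | heq | hlt
          · simp [hlt] at hd
            simp [not_lt.2 hlt.le, ← hd]
          · exact absurd heq.symm hne
          · simp [not_lt.2 hlt.le] at hd
            simp [hlt, ← hd]
  have := Nat.card_eq_of_bijective f hbij
  rw [Nat.card_prod] at this
  simp only [Nat.card_eq_fintype_card, Fintype.card_bool] at this
  rw [this, zc]
  ring

/-- Every bicyclic bitrade in τ-representation is spherical: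
if `[τ₁, τ₂, τ₃]` satisfies (T1), (T2), (T3) and some `τ_j` has exactly two cycles,
then `⟨τ₁, τ₂, τ₃⟩` is transitive on `Γ` and
`z(τ₁) + z(τ₂) + z(τ₃) = |Γ| + 2`. -/
theorem bicyclic_is_spherical (τ : Fin 3 → Equiv.Perm ℕ)
    (h : IsTauRep τ) (hb : Bicyclic τ) :
    TransOn τ ∧ zc (τ 0) + zc (τ 1) + zc (τ 2) = Nat.card (Gam τ) + 2 := by
  obtain ⟨j, hj⟩ := hb
  have hmov : ∀ i : Fin 3, mov (τ i) = Gam τ := by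
    intro i
    apply Set.Subset.antisymm (mov_subset_Gam τ i)
    intro x hx
    exact h.t3 i x hx
  have hGam_apply : ∀ (i : Fin 3) (x : ℕ), x ∈ Gam τ → τ i x ∈ Gam τ := by
    intro i x hx
    rw [← hmov i]
    intro hc
    exact h.t3 i x hx ((τ i).injective hc)
  have hjfin : (mov (τ j)).Finite := (hmov j).symm ▸ h.fin
  have hmemj : ∀ x ∈ Gam τ, τ j x ≠ x := h.t3 j
  -- involution property for i ≠ j
  have hinv : ∀ i : Fin 3, i ≠ j → ∀ x, τ i x ≠ x → τ i (τ i x) = x := by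
    intro i hij x hmx
    by_contra hne
    have hx : x ∈ Gam τ := mov_subset_Gam τ i hmx
    have hy : τ i x ∈ Gam τ := hGam_apply i x hx
    have hz : τ i (τ i x) ∈ Gam τ := hGam_apply i _ hy
    have hxy : x ≠ τ i x := Ne.symm hmx
    have hyz : τ i x ≠ τ i (τ i x) := Ne.symm (h.t3 i _ hy)
    have hxz : x ≠ τ i (τ i x) := Ne.symm hne
    have s1 : (τ i).SameCycle x (τ i x) := ⟨1, by simp⟩
    have s2 : (τ i).SameCycle (τ i x) (τ i (τ i x)) := ⟨1, by simp⟩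
    have s3 : (τ i).SameCycle x (τ i (τ i x)) := s1.trans s2
    exact three_classes hjfin (hmemj x hx) (hmemj _ hy) (hmemj _ hz)
      (fun hS => t2' h hij hxy s1 hS)
      (fun hS => t2' h hij hxz s3 hS)
      (fun hS => t2' h hij hyz s2 hS) hj
  have mem_clos : ∀ i : Fin 3, τ i ∈ Subgroup.closure ({τ 0, τ 1, τ 2} : Set (Equiv.Perm ℕ)) := by
    intro i
    apply Subgroup.subset_closure
    fin_cases i <;> simp
  have hsucc_ne : ∀ k : Fin 3, k + 1 ≠ k := by decide
  -- transitivity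
  have htrans : TransOn τ := by
    intro x hx y hy
    by_cases hxy : x = y
    · exact ⟨1, one_mem _, by simp [hxy]⟩
    by_cases hS : (τ j).SameCycle x y
    · obtain ⟨n, hn⟩ := hS
      exact ⟨(τ j) ^ n, zpow_mem (mem_clos j) n, hn⟩
    · set i := j + 1 with hi
      have hij : i ≠ j := hsucc_ne j
      set x' := τ i x with hx'def
      have hx' : x' ∈ Gam τ := hGam_apply i x hx
      have hxx' : x ≠ x' := Ne.symm (h.t3 i x hx)
      have hsc : (τ i).SameCycle x x' := ⟨1, by simp [hx'def]⟩
      have hnS : ¬ (τ j).SameCycle x x' := fun hS' => t2' h hij hxx' hsc hS'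
      by_cases hx'y : x' = y
      · exact ⟨τ i, mem_clos i, hx'y⟩
      · have hS' : (τ j).SameCycle x' y := by
          by_contra hno
          exact three_classes hjfin (hmemj x hx) (hmemj x' hx') (hmemj y hy)
            hnS hS hno hj
        obtain ⟨n, hn⟩ := hS'
        refine ⟨(τ j) ^ n * τ i, mul_mem (zpow_mem (mem_clos j) n) (mem_clos i), ?_⟩
        simp only [Equiv.Perm.mul_apply]
        rw [← hx'def, hn]
  refine ⟨htrans, ?_⟩
  -- counting
  have hcard : ∀ i : Fin 3, i ≠ j → 2 * zc (τ i) = Nat.card (Gam τ) := by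
    intro i hij
    have hfin : (mov (τ i)).Finite := (hmov i).symm ▸ h.fin
    have := card_mov_invol hfin (hinv i hij)
    rw [hmov i] at this
    omega
  have hj3 : j = 0 ∨ j = 1 ∨ j = 2 := by fin_cases j <;> simp
  rcases hj3 with rfl | rfl | rfl
  · have h1 := hcard 1 (by decide)
    have h2 := hcard 2 (by decide)
    omega
  · have h1 := hcard 0 (by decide)
    have h2 := hcard 2 (by decide)
    omega
  · have h1 := hcard 0 (by decide)
    have h2 := hcard 1 (by decide)
    omega
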